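/- For every natural number k with k ≤ r(E), the convex hull of the incidence vectors of the independent sets of M of cardinality exactly k equals the set of all x ∈ ℝ^E satisfying x(F) ≤ r(F) for all nonempty F ⊆ E, x(E) = k, and x_e ≥ 0 for all e ∈ E. -/

import Mathlib

open Finset

/-- A (loopless) matroid on a finite ground set, given by its independent sets. -/
structure FinMatroid (α : Type*) [Fintype α] [DecidableEq α] where
  Indep : Finset α → Prop
  empty_indep : Indep ∅
  subset_indep : ∀ ⦃I J : Finset α⦄, Indep J → I ⊆ J → Indep I
  exchange : ∀ ⦃I J : Finset α⦄, Indep I → Indep J → I.card < J.card →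
    ∃ e ∈ J \ I, Indep (insert e I)
  loopless : ∀ e : α, Indep {e}

variable {α : Type*} [Fintype α] [DecidableEq α]

open Classical in
/-- The rank of a set: the maximum cardinality of an independent subset. -/
noncomputable def FinMatroid.r (M : FinMatroid α) (F : Finset α) : ℕ :=
  (F.powerset.filter M.Indep).sup Finset.card

/-- incidence vector -/
noncomputable def incVec (I : Finset α) : α → ℝ := fun e => if e ∈ I then 1 else 0

/-- x(S) = ∑_{e ∈ S} x_e -/
noncomputable def fsum (x : α → ℝ) (S : Finset α) : ℝ := ∑ e ∈ S, x e

/-- closed set -/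
def FinMatroid.ClosedSet (M : FinMatroid α) (F : Finset α) : Prop :=
  ∀ e ∉ F, M.r F < M.r (insert e F)

/-- F is separable -/
def FinMatroid.Separable (M : FinMatroid α) (F : Finset α) : Prop :=
  ∃ F₁ F₂ : Finset α, F₁ ≠ ∅ ∧ F₂ ≠ ∅ ∧ Disjoint F₁ F₂ ∧ F₁ ∪ F₂ = F ∧
    M.r F₁ + M.r F₂ ≤ M.r F

def FinMatroid.Inseparable (M : FinMatroid α) (F : Finset α) : Prop :=
  ¬ M.Separable F

/-- the k-rank r^k(F) = k - r(E \ F), as an integer -/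
noncomputable def FinMatroid.krank (M : FinMatroid α) (k : ℕ) (F : Finset α) : ℤ :=
  (k : ℤ) - (M.r Fᶜ : ℤ)

/-- F is k-separable -/
noncomputable def FinMatroid.kSeparable (M : FinMatroid α) (k : ℕ) (F : Finset α) : Prop :=
  ∃ F₁ F₂ : Finset α, F₁ ≠ ∅ ∧ F₂ ≠ ∅ ∧ Disjoint F₁ F₂ ∧ F₁ ∪ F₂ = F ∧
    M.krank k F₁ + M.krank k F₂ = M.krank k F

noncomputable def FinMatroid.kInseparable (M : FinMatroid α) (k : ℕ) (F : Finset α) : Prop :=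
  ¬ M.kSeparable k F

/-- convex hull of incidence vectors of independent sets of cardinality exactly k -/
noncomputable def exactPolytope (M : FinMatroid α) (k : ℕ) : Set (α → ℝ) :=
  convexHull ℝ {x | ∃ I : Finset α, M.Indep I ∧ I.card = k ∧ x = incVec I}

/-- the cardinality constrained matroid polytope P^c(E) -/
noncomputable def cardPolytope (M : FinMatroid α) {m : ℕ} (c : Fin m → ℕ) : Set (α → ℝ) :=
  convexHull ℝ {x | ∃ I : Finset α, M.Indep I ∧ (∃ p : Fin m, I.card = c p) ∧ x = incVec I}

/-- dimension of (the affine hull of) a subset of ℝ^E -/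
noncomputable def polyDim (s : Set (α → ℝ)) : ℕ :=
  Module.finrank ℝ (affineSpan ℝ s).direction

/-- `a · x ≤ a₀` defines a facet of `P` -/
noncomputable def IsFacet (P : Set (α → ℝ)) (a : α → ℝ) (a₀ : ℝ) : Prop :=
  (∀ x ∈ P, ∑ e, a e * x e ≤ a₀) ∧
  polyDim {x ∈ P | ∑ e, a e * x e = a₀} + 1 = polyDim P


lemma card_le_r (M : FinMatroid α) {J F : Finset α} (hJ : M.Indep J) (hJF : J ⊆ F) :
    J.card ≤ M.r F := by
  classical
  apply Finset.le_sup (f := Finset.card)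
  simp only [Finset.mem_filter, Finset.mem_powerset]
  refine ⟨hJF, ?_⟩
  convert hJ using 2 <;> first | rfl | exact Subsingleton.elim _ _

lemma exists_r (M : FinMatroid α) (F : Finset α) :
    ∃ J : Finset α, J ⊆ F ∧ M.Indep J ∧ J.card = M.r F := by
  classical
  have hne : (F.powerset.filter M.Indep).Nonempty := ⟨∅, by simp [M.empty_indep]⟩
  obtain ⟨J, hJ, hJ2⟩ := Finset.exists_mem_eq_sup _ hne Finset.card
  rw [Finset.mem_filter, Finset.mem_powerset] at hJ
  exact ⟨J, hJ.1, hJ.2, by rw [FinMatroid.r, ← hJ2]⟩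

lemma maximal_card (M : FinMatroid α) {B F : Finset α} (hBF : B ⊆ F) (hB : M.Indep B)
    (hmax : ∀ e ∈ F, e ∉ B → ¬ M.Indep (insert e B)) : B.card = M.r F := by
  obtain ⟨J, hJF, hJ, hJc⟩ := exists_r M F
  refine le_antisymm (card_le_r M hB hBF) ?_
  rw [← hJc]
  by_contra hlt
  push_neg at hlt
  obtain ⟨e, he, hei⟩ := M.exchange hB hJ hlt
  rw [Finset.mem_sdiff] at he
  exact hmax e (hJF he.1) he.2 hei

lemma trunc_maximal_card (M : FinMatroid α) (k : ℕ) {B F : Finset α} (hBF : B ⊆ F)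
    (hB : M.Indep B) (hBk : B.card ≤ k)
    (hmax : ∀ e ∈ F, e ∉ B → M.Indep (insert e B) → k ≤ B.card) :
    B.card = min (M.r F) k := by
  rcases eq_or_lt_of_le hBk with h | h
  · have : k ≤ M.r F := h ▸ card_le_r M hB hBF
    omega
  · have : B.card = M.r F := maximal_card M hBF hB (fun e heF heB hi => by
      exact absurd (hmax e heF heB hi) (by omega))
    omega

lemma abel_nonneg (f d : ℕ → ℝ) (n : ℕ) (h0 : d 0 = 0) (hn : d n = 0)
    (hd : ∀ i ≤ n, 0 ≤ d i) (hf : ∀ i, i + 1 < n → f (i + 1) ≤ f i) :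
    0 ≤ ∑ i ∈ Finset.range n, f i * (d (i + 1) - d i) := by
  rcases Nat.eq_zero_or_pos n with rfl | hpos
  · simp
  obtain ⟨m, rfl⟩ := Nat.exists_eq_add_of_le hpos
  simp only [mul_sub, Finset.sum_sub_distrib]
  have h1 : ∑ i ∈ Finset.range (1 + m), f i * d (i + 1)
      = ∑ i ∈ Finset.range m, f i * d (i + 1) := by
    have hn' : d (m + 1) = 0 := by rw [add_comm]; exact hn
    rw [add_comm 1 m, Finset.sum_range_succ, hn', mul_zero, add_zero]
  have h2 : ∑ i ∈ Finset.range (1 + m), f i * d i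
      = ∑ i ∈ Finset.range m, f (i + 1) * d (i + 1) := by
    rw [add_comm 1 m, Finset.sum_range_succ']
    simp [h0]
  rw [h1, h2, ← Finset.sum_sub_distrib]
  apply Finset.sum_nonneg
  intro i hi
  rw [Finset.mem_range] at hi
  rw [← sub_mul]
  apply mul_nonneg
  · have := hf i (by omega); linarith
  · exact hd (i + 1) (by omega)

open Classical in
noncomputable def greedyB (M : FinMatroid α) (k : ℕ) (g : ℕ → α) : ℕ → Finset α
  | 0 => ∅
  | (i + 1) =>
    let B := greedyB M k g i
    if M.Indep (insert (g i) B) ∧ (insert (g i) B).card ≤ k then insert (g i) B else B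

lemma greedy_bound (M : FinMatroid α) (k : ℕ) (hk : k ≤ M.r Finset.univ) (x : α → ℝ)
    (hx1 : ∀ F : Finset α, F ≠ ∅ → fsum x F ≤ (M.r F : ℝ))
    (hx2 : fsum x Finset.univ = (k : ℝ)) (hx3 : ∀ e : α, 0 ≤ x e) (w : α → ℝ) :
    ∃ B : Finset α, M.Indep B ∧ B.card = k ∧ ∑ e, w e * x e ≤ ∑ e ∈ B, w e := by
  classical
  rcases isEmpty_or_nonempty α with hemp | hne
  · refine ⟨∅, M.empty_indep, ?_, by simp⟩
    obtain ⟨J, _, _, hJc⟩ := exists_r M (Finset.univ : Finset α)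
    have hJ0 : J = ∅ := Finset.eq_empty_of_isEmpty J
    rw [hJ0, Finset.card_empty] at hJc
    rw [Finset.card_empty]
    omega
  inhabit α
  set n := Fintype.card α with hn
  have hn0 : 0 < n := Fintype.card_pos
  set e0 : Fin n ≃ α := (Fintype.equivFin α).symm with he0
  set σ := Tuple.sort (fun i => -w (e0 i)) with hσ
  set gg : Fin n ≃ α := σ.trans e0 with hgg
  have hmono := Tuple.monotone_sort (fun i => -w (e0 i))
  have hanti : ∀ i j : Fin n, i ≤ j → w (gg j) ≤ w (gg i) := by
    intro i j hij
    have h2 := hmono hij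
    simp only [Function.comp_apply] at h2
    have : gg i = e0 (σ i) := rfl
    have h3 : gg j = e0 (σ j) := rfl
    rw [this, h3]
    linarith
  set g : ℕ → α := fun i => if h : i < n then gg ⟨i, h⟩ else default with hg
  have hgval : ∀ (i : ℕ) (h : i < n), g i = gg ⟨i, h⟩ := by
    intro i h; simp [hg, h]
  set P : ℕ → Finset α := fun i =>
    (Finset.univ.filter (fun j : Fin n => (j : ℕ) < i)).image gg with hP
  have hP0 : P 0 = ∅ := by simp [hP]
  have hPn : P n = Finset.univ := by
    rw [hP]
    simp only
    rw [Finset.filter_true_of_mem (fun j _ => j.isLt)]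
    exact Finset.image_univ_equiv gg
  have hgnotP : ∀ i j : ℕ, (h : j < n) → i ≤ j → g j ∉ P i := by
    intro i j h hij hmem
    rw [hP] at hmem
    simp only [Finset.mem_image, Finset.mem_filter, Finset.mem_univ, true_and] at hmem
    obtain ⟨j', hj', hj'2⟩ := hmem
    rw [hgval j h] at hj'2
    have heq := gg.injective hj'2
    have hval : (j' : ℕ) = j := by rw [heq]
    omega
  have hPsucc : ∀ i : ℕ, i < n → P (i + 1) = insert (g i) (P i) := by
    intro i h
    rw [hP]
    simp only
    have : (Finset.univ.filter (fun j : Fin n => (j : ℕ) < i + 1))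
        = insert ⟨i, h⟩ (Finset.univ.filter (fun j : Fin n => (j : ℕ) < i)) := by
      ext j
      simp only [Finset.mem_filter, Finset.mem_univ, true_and, Finset.mem_insert]
      constructor
      · intro hj
        rcases Nat.lt_succ_iff_lt_or_eq.mp hj with h1 | h1
        · exact Or.inr h1
        · exact Or.inl (Fin.ext h1)
      · rintro (rfl | hj)
        · exact Nat.lt_succ_self i
        · omega
    rw [this, Finset.image_insert, ← hgval i h]
  have hPmono : ∀ i : ℕ, P i ⊆ P (i + 1) := by
    intro i
    rw [hP]
    apply Finset.image_subset_image
    intro j hj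
    simp only [Finset.mem_filter, Finset.mem_univ, true_and] at *
    omega
  set B : ℕ → Finset α := greedyB M k g with hB
  have hB0 : B 0 = ∅ := rfl
  have hBsucc : ∀ i : ℕ, B (i + 1) =
      if M.Indep (insert (g i) (B i)) ∧ (insert (g i) (B i)).card ≤ k
      then insert (g i) (B i) else B i := by
    intro i
    rw [hB]
    rfl
  -- main invariant
  have inv : ∀ i : ℕ, i ≤ n → M.Indep (B i) ∧ B i ⊆ P i ∧ (B i).card ≤ k ∧
      (∀ e ∈ P i, e ∉ B i → M.Indep (insert e (B i)) → k ≤ (B i).card) := by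
    intro i
    induction i with
    | zero => intro _; rw [hB0, hP0]; exact ⟨M.empty_indep, by simp, by simp, by simp⟩
    | succ i ih =>
      intro hi1
      obtain ⟨h1, h2, h3, h4⟩ := ih (by omega)
      have hin : i < n := by omega
      have hginotB : g i ∉ B i := fun hmem => hgnotP i i hin le_rfl (h2 hmem)
      rw [hBsucc i]
      by_cases hc : M.Indep (insert (g i) (B i)) ∧ (insert (g i) (B i)).card ≤ k
      · rw [if_pos hc]
        refine ⟨hc.1, ?_, hc.2, ?_⟩
        · rw [hPsucc i hin]
          exact Finset.insert_subset_insert _ h2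
        · intro e heP heB hind
          rw [hPsucc i hin, Finset.mem_insert] at heP
          have heg : e ≠ g i := fun h => heB (h ▸ Finset.mem_insert_self _ _)
          have heP' : e ∈ P i := heP.resolve_left heg
          have heB' : e ∉ B i := fun h => heB (Finset.mem_insert_of_mem h)
          have hind' : M.Indep (insert e (B i)) :=
            M.subset_indep hind (Finset.insert_subset_insert _ (Finset.subset_insert _ _))
          have := h4 e heP' heB' hind'
          calc k ≤ (B i).card := this
            _ ≤ (insert (g i) (B i)).card := Finset.card_le_card (Finset.subset_insert _ _)
      · rw [if_neg hc]
        refine ⟨h1, h2.trans (hPmono i), h3, ?_⟩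
        intro e heP heB hind
        rw [hPsucc i hin, Finset.mem_insert] at heP
        rcases heP with heq | heP'
        · rw [heq] at heB hind
          have hne2 : ¬ (insert (g i) (B i)).card ≤ k := fun hcard => hc ⟨hind, hcard⟩
          rw [Finset.card_insert_of_notMem heB] at hne2
          omega
        · exact h4 e heP' heB hind
  have hcard : ∀ i : ℕ, i ≤ n → (B i).card = min (M.r (P i)) k := by
    intro i hi
    obtain ⟨h1, h2, h3, h4⟩ := inv i hi
    exact trunc_maximal_card M k h2 h1 h3 h4
  -- B n ∩ P i = B i
  have hint : ∀ j : ℕ, j ≤ n → ∀ i : ℕ, i ≤ j → B j ∩ P i = B i := by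
    intro j
    induction j with
    | zero =>
      intro _ i hi
      interval_cases i
      rw [hB0]; simp
    | succ j ih =>
      intro hj i hi
      rcases Nat.lt_succ_iff_lt_or_eq.mp (Nat.lt_succ_of_le hi) with hi' | heq
      · have hij : i ≤ j := by omega
        have hjn : j < n := by omega
        have hgnot : g j ∉ P i := hgnotP i j hjn hij
        rw [hBsucc j]
        by_cases hc : M.Indep (insert (g j) (B j)) ∧ (insert (g j) (B j)).card ≤ k
        · rw [if_pos hc, Finset.insert_inter_of_notMem hgnot]
          exact ih (by omega) i hij
        · rw [if_neg hc]
          exact ih (by omega) i hij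
      · rw [heq]
        exact Finset.inter_eq_left.mpr (inv (j + 1) hj).2.1
  set Bn := B n with hBn
  have hBnIndep : M.Indep Bn := (inv n le_rfl).1
  have hBncard : Bn.card = k := by
    have h5 := hcard n le_rfl
    rw [hPn] at h5
    rw [hBn]
    omega
  refine ⟨Bn, hBnIndep, hBncard, ?_⟩
  -- now the summation argument
  set u : ℕ → ℝ := fun i => fsum x (P i) with hu
  set v : ℕ → ℝ := fun i => ((Bn ∩ P i).card : ℝ) with hv
  set f : ℕ → ℝ := fun i => w (g i) with hf
  have hd0 : v 0 - u 0 = 0 := by simp [hu, hv, hP0, fsum]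
  have hdn : v n - u n = 0 := by
    have h1 : u n = (k : ℝ) := by rw [hu]; simp only; rw [hPn]; exact hx2
    have h2 : v n = (k : ℝ) := by
      rw [hv]; simp only; rw [hPn, Finset.inter_univ, hBncard]
    rw [h1, h2]; ring
  have hdpos : ∀ i : ℕ, i ≤ n → 0 ≤ v i - u i := by
    intro i hi
    rcases Nat.eq_zero_or_pos i with rfl | hipos
    · rw [hd0]
    have hvi : v i = ((min (M.r (P i)) k : ℕ) : ℝ) := by
      rw [hv]; simp only
      rw [hBn, hint n le_rfl i hi, hcard i hi]
    have hPine : P i ≠ ∅ := by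
      intro hemp
      have : g 0 ∈ P i := by
        rw [hgval 0 hn0, hP]
        simp only [Finset.mem_image]
        exact ⟨⟨0, hn0⟩, by simp [hipos], rfl⟩
      rw [hemp] at this
      simp at this
    have hur : u i ≤ (M.r (P i) : ℝ) := hx1 (P i) hPine
    have huk : u i ≤ (k : ℝ) := by
      rw [hu, ← hx2]
      exact Finset.sum_le_sum_of_subset_of_nonneg (Finset.subset_univ _)
        (fun e _ _ => hx3 e)
    rw [hvi]
    rcases le_total (M.r (P i)) k with h | h
    · rw [min_eq_left h]; linarith
    · rw [min_eq_right h]; linarith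
  have hfanti : ∀ i : ℕ, i + 1 < n → f (i + 1) ≤ f i := by
    intro i hi
    rw [hf]
    simp only
    rw [hgval i (by omega), hgval (i + 1) hi]
    exact hanti ⟨i, by omega⟩ ⟨i + 1, hi⟩ (by simp)
  have habel := abel_nonneg f (fun i => v i - u i) n hd0 hdn hdpos hfanti
  -- sum identities
  have hustep : ∀ i : ℕ, i < n → u (i + 1) - u i = x (g i) := by
    intro i hi
    rw [hu]
    simp only
    rw [hPsucc i hi, fsum, fsum,
      Finset.sum_insert (hgnotP i i hi le_rfl)]
    ring
  have hvstep : ∀ i : ℕ, i < n → v (i + 1) - v i = (if g i ∈ Bn then (1 : ℝ) else 0) := by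
    intro i hi
    rw [hv]
    simp only
    rw [hPsucc i hi]
    by_cases hgB : g i ∈ Bn
    · rw [if_pos hgB, Finset.inter_insert_of_mem hgB,
        Finset.card_insert_of_notMem (fun hmem => hgnotP i i hi le_rfl
          (Finset.mem_of_mem_inter_right hmem))]
      push_cast; ring
    · rw [if_neg hgB, Finset.inter_insert_of_notMem hgB]
      ring
  have hsum1 : ∑ e, w e * x e = ∑ i ∈ Finset.range n, f i * (u (i + 1) - u i) := by
    rw [← Equiv.sum_comp gg (fun e => w e * x e)]
    rw [← Fin.sum_univ_eq_sum_range (fun i => f i * (u (i + 1) - u i)) n]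
    apply Finset.sum_congr rfl
    intro i _
    rw [hustep i i.isLt, hf]
    simp only
    rw [hgval i i.isLt]
  have hsum2 : ∑ e ∈ Bn, w e = ∑ i ∈ Finset.range n, f i * (v (i + 1) - v i) := by
    have e1 : ∑ e ∈ Bn, w e = ∑ e, (if e ∈ Bn then w e else 0) := by
      rw [Finset.sum_ite_mem, Finset.univ_inter]
    have e2 : ∑ e : α, (if e ∈ Bn then w e else 0)
        = ∑ i : Fin n, (if gg i ∈ Bn then w (gg i) else 0) :=
      (Equiv.sum_comp gg (fun e => if e ∈ Bn then w e else 0)).symm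
    have e3 : ∑ i : Fin n, (if gg i ∈ Bn then w (gg i) else 0)
        = ∑ i ∈ Finset.range n, (if g i ∈ Bn then w (g i) else 0) := by
      rw [← Fin.sum_univ_eq_sum_range (fun j => if g j ∈ Bn then w (g j) else 0) n]
      apply Finset.sum_congr rfl
      intro i _
      rw [hgval i i.isLt]
    rw [e1, e2, e3]
    apply Finset.sum_congr rfl
    intro i hi
    rw [Finset.mem_range] at hi
    rw [hvstep i hi, hf]
    simp only
    split_ifs <;> ring
  have key : ∑ i ∈ Finset.range n, f i * ((v (i + 1) - u (i + 1)) - (v i - u i))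
      = ∑ i ∈ Finset.range n, f i * (v (i + 1) - v i)
        - ∑ i ∈ Finset.range n, f i * (u (i + 1) - u i) := by
    rw [← Finset.sum_sub_distrib]
    apply Finset.sum_congr rfl
    intro i _
    ring
  have habel' : 0 ≤ ∑ i ∈ Finset.range n, f i * ((v (i + 1) - u (i + 1)) - (v i - u i)) := by
    convert habel using 2
  rw [hsum1, hsum2]
  linarith [habel', key]

lemma fsum_incVec (I F : Finset α) : fsum (incVec I) F = ((F ∩ I).card : ℝ) := by
  rw [fsum]
  simp only [incVec]
  rw [Finset.sum_ite_mem]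
  simp

theorem exactPolytope_eq' (M : FinMatroid α) (k : ℕ) (hk : k ≤ M.r Finset.univ) :
    convexHull ℝ {x : α → ℝ | ∃ I : Finset α, M.Indep I ∧ I.card = k ∧ x = incVec I} =
      {x : α → ℝ | (∀ F : Finset α, F ≠ ∅ → fsum x F ≤ (M.r F : ℝ)) ∧
        fsum x Finset.univ = (k : ℝ) ∧ (∀ e : α, 0 ≤ x e)} := by
  classical
  apply Set.Subset.antisymm
  · apply convexHull_min
    · rintro y ⟨I, hI, hIc, rfl⟩
      refine ⟨?_, ?_, ?_⟩
      · intro F _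
        rw [fsum_incVec]
        exact_mod_cast card_le_r M (M.subset_indep hI Finset.inter_subset_right)
          Finset.inter_subset_left
      · rw [fsum_incVec, Finset.univ_inter, hIc]
      · intro e
        by_cases h : e ∈ I <;> simp [incVec, h]
    · rintro y ⟨hy1, hy2, hy3⟩ z ⟨hz1, hz2, hz3⟩ a b ha hb hab
      have hlin : ∀ F : Finset α, fsum (a • y + b • z) F = a * fsum y F + b * fsum z F := by
        intro F
        rw [fsum, fsum, fsum, Finset.mul_sum, Finset.mul_sum, ← Finset.sum_add_distrib]
        apply Finset.sum_congr rfl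
        intro e _
        simp [smul_eq_mul]
      refine ⟨?_, ?_, ?_⟩
      · intro F hF
        rw [hlin F]
        have h1 := hy1 F hF
        have h2 := hz1 F hF
        have h3 : a * fsum y F ≤ a * (M.r F : ℝ) := mul_le_mul_of_nonneg_left h1 ha
        have h4 : b * fsum z F ≤ b * (M.r F : ℝ) := mul_le_mul_of_nonneg_left h2 hb
        have h5 : a * (M.r F : ℝ) + b * (M.r F : ℝ) = (M.r F : ℝ) := by
          rw [← add_mul, hab, one_mul]
        linarith
      · rw [hlin Finset.univ, hy2, hz2, ← add_mul, hab, one_mul]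
      · intro e
        have : (a • y + b • z) e = a * y e + b * z e := by simp [smul_eq_mul]
        rw [this]
        exact add_nonneg (mul_nonneg ha (hy3 e)) (mul_nonneg hb (hz3 e))
  · intro x hx
    obtain ⟨hx1, hx2, hx3⟩ := hx
    by_contra hxn
    set S : Set (α → ℝ) := {y | ∃ I : Finset α, M.Indep I ∧ I.card = k ∧ y = incVec I} with hS
    have hSfin : S.Finite := Set.Finite.subset (Set.finite_range incVec)
      (by rintro y ⟨I, _, _, rfl⟩; exact ⟨I, rfl⟩)
    have hconv : Convex ℝ (convexHull ℝ S) := convex_convexHull ℝ S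
    have hclosed : IsClosed (convexHull ℝ S) := (hSfin.isCompact_convexHull (𝕜 := ℝ)).isClosed
    obtain ⟨f, u0, hfS, hfx⟩ := geometric_hahn_banach_closed_point hconv hclosed hxn
    set w : α → ℝ := fun e => f (Pi.single e 1) with hw
    have hrep : ∀ y : α → ℝ, f y = ∑ e, w e * y e := by
      intro y
      have hy : y = ∑ e, y e • (Pi.single e 1 : α → ℝ) := by
        funext a
        rw [Finset.sum_apply]
        simp only [Pi.smul_apply, Pi.single_apply, smul_eq_mul, mul_ite, mul_one, mul_zero]
        rw [Finset.sum_ite_eq Finset.univ a (fun e => y e)]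
        simp
      conv_lhs => rw [hy]
      rw [map_sum]
      apply Finset.sum_congr rfl
      intro e _
      rw [f.map_smul, smul_eq_mul, mul_comm]
    obtain ⟨B, hB, hBc, hle⟩ := greedy_bound M k hk x hx1 hx2 hx3 w
    have h1 : f (incVec B) < u0 := hfS _ (subset_convexHull ℝ S ⟨B, hB, hBc, rfl⟩)
    have h2 : f (incVec B) = ∑ e, w e * incVec B e := hrep _
    have h3 : ∑ e, w e * incVec B e = ∑ e ∈ B, w e := by
      simp only [incVec, mul_ite, mul_one, mul_zero]
      rw [Finset.sum_ite_mem, Finset.univ_inter]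
    have h4 : f x = ∑ e, w e * x e := hrep x
    linarith

/-- linear description of the polytope of independent sets of
cardinality exactly k. -/
theorem exactPolytope_eq {α : Type*} [Fintype α] [DecidableEq α]
    (M : FinMatroid α) (k : ℕ) (hk : k ≤ M.r Finset.univ) :
    exactPolytope M k =
      {x : α → ℝ | (∀ F : Finset α, F ≠ ∅ → fsum x F ≤ (M.r F : ℝ)) ∧
        fsum x Finset.univ = (k : ℝ) ∧ (∀ e : α, 0 ≤ x e)} := by
  rw [exactPolytope]
  exact exactPolytope_eq' M k hk
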